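/- Let w : ℝ → ℝ be continuous with w(x) ≥ δ > 0 and w ∈ L^∞(ℝ). For z ∈ ℂ∖ℝ, every solution ψ of -ψ'' + ψ = z w ψ on [x₀, ∞) that lies in L²((x₀,∞)) with weight w is, up to scalar multiples, unique; i.e., the weighted Sturm–Liouville problem -ψ'' + ψ = z w ψ is in the limit point case at +∞. -/

import Mathlib

open MeasureTheory

open Set
set_option maxHeartbeats 1000000

private lemma sl_ode_zero (z : ℂ) (w : ℝ → ℝ) (M : ℝ)
    (hw : ∀ x, |w x| ≤ M)
    (u u' : ℝ → ℂ) (hu : ∀ x, HasDerivAt u (u' x) x)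
    (hu' : ∀ x, HasDerivAt u' (u x - z * (w x : ℂ) * u x) x)
    (x₀ : ℝ) (h0 : u x₀ = 0) (h0' : u' x₀ = 0) :
    ∀ x ∈ Set.Ici x₀, u x = 0 := by
  have hM : 0 ≤ M := le_trans (abs_nonneg _) (hw 0)
  set Kr : ℝ := 1 + ‖z‖ * M with hKr
  have hKr1 : 1 ≤ Kr := le_add_of_nonneg_right (by positivity)
  set K : NNReal := ⟨Kr, by positivity⟩ with hK
  set v : ℝ → ℂ × ℂ → ℂ × ℂ := fun t p => (p.2, (1 - z * (w t : ℂ)) * p.1) with hv_def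
  have hcoef : ∀ t, ‖(1 : ℂ) - z * (w t : ℂ)‖ ≤ Kr := by
    intro t
    calc ‖(1 : ℂ) - z * (w t : ℂ)‖ ≤ ‖(1:ℂ)‖ + ‖z * (w t : ℂ)‖ := norm_sub_le _ _
    _ = 1 + ‖z‖ * |w t| := by simp [Complex.norm_real]
    _ ≤ 1 + ‖z‖ * M := by gcongr; exact hw t
  have hv : ∀ t, LipschitzWith K (v t) := by
    intro t
    apply LipschitzWith.of_dist_le_mul
    intro p q
    rw [Prod.dist_eq, Prod.dist_eq]
    have h1 : dist (v t p).1 (v t q).1 = dist p.2 q.2 := rfl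
    have h2 : dist (v t p).2 (v t q).2 = ‖(1:ℂ) - z * (w t : ℂ)‖ * dist p.1 q.1 := by
      simp only [hv_def, dist_eq_norm]
      rw [← mul_sub, norm_mul]
    rw [h1, h2]
    have hKc : (K : ℝ) = Kr := rfl
    rw [hKc]
    apply max_le
    · calc dist p.2 q.2 ≤ max (dist p.1 q.1) (dist p.2 q.2) := le_max_right _ _
      _ ≤ Kr * max (dist p.1 q.1) (dist p.2 q.2) := by
          nlinarith [le_max_left (dist p.1 q.1) (dist p.2 q.2), dist_nonneg (x := p.1) (y := q.1), dist_nonneg (x := p.2) (y := q.2)]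
    · have e1 : ‖(1:ℂ) - z * (w t : ℂ)‖ * dist p.1 q.1 ≤ Kr * dist p.1 q.1 :=
        mul_le_mul_of_nonneg_right (hcoef t) dist_nonneg
      have e2 : Kr * dist p.1 q.1 ≤ Kr * max (dist p.1 q.1) (dist p.2 q.2) :=
        mul_le_mul_of_nonneg_left (le_max_left _ _) (by linarith)
      linarith
  intro x hx
  set f : ℝ → ℂ × ℂ := fun t => (u t, u' t) with hf_def
  have hf' : ∀ t, HasDerivAt f (v t (f t)) t := by
    intro t
    have : v t (f t) = (u' t, u t - z * (w t : ℂ) * u t) := by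
      simp only [hv_def, hf_def]
      congr 1
      ring
    rw [this]
    exact (hu t).prodMk (hu' t)
  have key : EqOn f (fun _ => ((0:ℂ), (0:ℂ))) (Icc x₀ x) := by
    apply ODE_solution_unique_of_mem_Icc_right (v := v) (s := fun _ => univ)
      (fun t _ => (hv t).lipschitzOnWith)
    · exact fun t _ => ((hf' t).continuousAt).continuousWithinAt
    · exact fun t _ => (hf' t).hasDerivWithinAt
    · exact fun t _ => mem_univ _
    · exact continuousOn_const
    · intro t _
      have : v t ((0:ℂ), (0:ℂ)) = ((0:ℂ), (0:ℂ)) := by simp [hv_def]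
      have h2 := (hasDerivAt_const t ((0:ℂ),(0:ℂ))).hasDerivWithinAt (s := Ici t)
      rw [show v t ((0:ℂ),(0:ℂ)) = ((0:ℂ),(0:ℂ)) from this]
      exact h2
    · exact fun t _ => mem_univ _
    · simp [hf_def, h0, h0']
  have := key (mem_Icc.mpr ⟨hx, le_refl x⟩)
  have h3 : (u x, u' x) = ((0:ℂ), (0:ℂ)) := this
  exact (Prod.mk.injEq _ _ _ _ ▸ h3 : _ ∧ _).1

private lemma deriv_sq_integrable (f f' f'' : ℝ → ℂ) (x₀ : ℝ)
    (hf : ∀ x, HasDerivAt f (f' x) x) (hf' : ∀ x, HasDerivAt f' (f'' x) x)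
    (hf''c : Continuous f'')
    (h2 : IntegrableOn (fun x => ‖f x‖ ^ 2) (Set.Ioi x₀))
    (h2'' : IntegrableOn (fun x => ‖f'' x‖ ^ 2) (Set.Ioi x₀)) :
    IntegrableOn (fun x => ‖f' x‖ ^ 2) (Set.Ioi x₀) := by
  have hfc : Continuous f := by
    rw [continuous_iff_continuousAt]; exact fun x => (hf x).continuousAt
  have hf'c : Continuous f' := by
    rw [continuous_iff_continuousAt]; exact fun x => (hf' x).continuousAt
  have key : ∀ a : ℂ, ((starRingEnd ℂ) a * a).re = ‖a‖ ^ 2 := by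
    intro a
    rw [mul_comm, Complex.mul_conj, Complex.ofReal_re, Complex.normSq_eq_norm_sq]
  have keysw : ∀ a b : ℂ, ((starRingEnd ℂ) a * b).re = ((starRingEnd ℂ) b * a).re := by
    intro a b
    simp only [Complex.mul_re, Complex.conj_re, Complex.conj_im]
    ring
  set G : ℝ → ℝ := fun x => ((starRingEnd ℂ) (f x) * f' x).re with hG_def
  have hGc : Continuous G := by
    apply Complex.continuous_re.comp
    exact (Complex.continuous_conj.comp hfc).mul hf'c
  have hGd : ∀ x, HasDerivAt G (‖f' x‖ ^ 2 + ((starRingEnd ℂ) (f x) * f'' x).re) x := by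
    intro x
    have h1 : HasDerivAt (fun y => (starRingEnd ℂ) (f y) * f' y)
        ((starRingEnd ℂ) (f' x) * f' x + (starRingEnd ℂ) (f x) * f'' x) x := by
      have := ((hf x).star).mul (hf' x)
      exact this
    have h2' := Complex.reCLM.hasFDerivAt.comp_hasDerivAt x h1
    exact h2'.congr_deriv (by simp [key])
  have hNd : ∀ x, HasDerivAt (fun y => ‖f y‖ ^ 2) (2 * G x) x := by
    intro x
    have h1 : HasDerivAt (fun y => (starRingEnd ℂ) (f y) * f y)
        ((starRingEnd ℂ) (f' x) * f x + (starRingEnd ℂ) (f x) * f' x) x := by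
      have := ((hf x).star).mul (hf x)
      exact this
    have h2' := Complex.reCLM.hasFDerivAt.comp_hasDerivAt x h1
    have h3 : HasDerivAt (fun y => ((starRingEnd ℂ) (f y) * f y).re)
        (2 * G x) x := by
      refine h2'.congr_deriv ?_
      simp only [Complex.reCLM_apply, Complex.add_re, hG_def]
      rw [keysw (f' x) (f x)]
      ring
    have h4 : (fun y => ((starRingEnd ℂ) (f y) * f y).re) = fun y => ‖f y‖ ^ 2 := by
      funext y; exact key (f y)
    rwa [h4] at h3
  -- Step A: G drops below 1 arbitrarily far out
  have stepA : ∀ B : ℝ, ∃ b : ℝ, max B x₀ < b ∧ G b < 1 := by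
    intro B
    by_contra hcon
    push_neg at hcon
    set B' : ℝ := max B x₀ with hB'
    have hGge : ∀ x, B' < x → 1 ≤ G x := fun x hx => hcon x hx
    -- k = |f|² - 2x is monotone on [B'+1, ∞)
    set k : ℝ → ℝ := fun x => ‖f x‖ ^ 2 - 2 * x with hk_def
    have hkd : ∀ x, HasDerivAt k (2 * G x - 2) x := by
      intro x
      exact ((hNd x).sub ((hasDerivAt_id x).const_mul 2)).congr_deriv (by ring)
    have hmono : MonotoneOn k (Ici (B' + 1)) := by
      apply monotoneOn_of_deriv_nonneg (convex_Ici _)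
      · exact Continuous.continuousOn (by
          rw [continuous_iff_continuousAt]; exact fun x => (hkd x).continuousAt)
      · intro x hx
        exact (hkd x).differentiableAt.differentiableWithinAt
      · intro x hx
        rw [interior_Ici] at hx
        rw [(hkd x).deriv]
        have : 1 ≤ G x := hGge x (by linarith [mem_Ioi.mp hx])
        linarith
    have hlb : ∀ x, B' + 2 < x → (1:ℝ) ≤ ‖f x‖ ^ 2 := by
      intro x hx
      have h1 : k (B' + 1) ≤ k x := hmono (self_mem_Ici) (by simp; linarith) (by linarith)
      have h2a : (0:ℝ) ≤ ‖f (B' + 1)‖ ^ 2 := sq_nonneg _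
      simp only [hk_def] at h1
      nlinarith
    have hint1 : IntegrableOn (fun _ => (1:ℝ)) (Ioi (B' + 2)) := by
      apply Integrable.mono' (h2.mono_set (Ioi_subset_Ioi (by linarith [le_max_right B x₀, hB'])))
        aestronglyMeasurable_const
      rw [ae_restrict_iff' measurableSet_Ioi]
      filter_upwards with x hx
      rw [norm_one]
      exact hlb x (mem_Ioi.mp hx)
    rw [integrableOn_const_iff] at hint1
    rcases hint1 with h | h
    · norm_num at h
    · rw [Real.volume_Ioi] at h
      exact (lt_irrefl _ h).elim
  -- Step B: uniform bound on interval integrals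
  set C : ℝ := ∫ x in Ioi x₀, (‖f x‖ ^ 2 + ‖f'' x‖ ^ 2) with hC
  set I : ℝ := 1 + |G x₀| + C with hI
  have stepB : ∀ b : ℝ, x₀ ≤ b → G b < 1 → (∫ x in x₀..b, ‖f' x‖ ^ 2) ≤ I := by
    intro b hb hGb
    have hcont1 : Continuous fun x => ‖f' x‖ ^ 2 := by
      exact (continuous_norm.comp hf'c).pow 2
    have hcont2 : Continuous fun x => ((starRingEnd ℂ) (f x) * f'' x).re := by
      exact Complex.continuous_re.comp ((Complex.continuous_conj.comp hfc).mul hf''c)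
    have hcont3 : Continuous fun x => ‖f x‖ ^ 2 + ‖f'' x‖ ^ 2 := by
      exact ((continuous_norm.comp hfc).pow 2).add ((continuous_norm.comp hf''c).pow 2)
    have ftc : (∫ x in x₀..b, (‖f' x‖ ^ 2 + ((starRingEnd ℂ) (f x) * f'' x).re))
        = G b - G x₀ := by
      apply intervalIntegral.integral_eq_sub_of_hasDerivAt (fun x _ => hGd x)
      exact (hcont1.add hcont2).intervalIntegrable x₀ b
    have hsplit : (∫ x in x₀..b, ‖f' x‖ ^ 2)
        = (G b - G x₀) - ∫ x in x₀..b, ((starRingEnd ℂ) (f x) * f'' x).re := by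
      rw [← ftc, intervalIntegral.integral_add (hcont1.intervalIntegrable x₀ b)
        (hcont2.intervalIntegrable x₀ b)]
      ring
    have hbd1 : |∫ x in x₀..b, ((starRingEnd ℂ) (f x) * f'' x).re|
        ≤ ∫ x in x₀..b, (‖f x‖ ^ 2 + ‖f'' x‖ ^ 2) := by
      calc |∫ x in x₀..b, ((starRingEnd ℂ) (f x) * f'' x).re|
          ≤ ∫ x in x₀..b, |((starRingEnd ℂ) (f x) * f'' x).re| :=
            intervalIntegral.abs_integral_le_integral_abs hb
        _ ≤ ∫ x in x₀..b, (‖f x‖ ^ 2 + ‖f'' x‖ ^ 2) := by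
            apply intervalIntegral.integral_mono_on hb
              (hcont2.abs.intervalIntegrable x₀ b)
              (hcont3.intervalIntegrable x₀ b)
            intro x _
            have h1 : |((starRingEnd ℂ) (f x) * f'' x).re| ≤ ‖(starRingEnd ℂ) (f x) * f'' x‖ :=
              Complex.abs_re_le_norm _
            have h2a : ‖(starRingEnd ℂ) (f x) * f'' x‖
                = ‖f x‖ * ‖f'' x‖ := by
              rw [norm_mul, Complex.norm_conj]
            nlinarith [norm_nonneg (f x), norm_nonneg (f'' x),
              sq_nonneg (‖f x‖ - ‖f'' x‖)]
    have hbd2 : (∫ x in x₀..b, (‖f x‖ ^ 2 + ‖f'' x‖ ^ 2)) ≤ C := by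
      rw [intervalIntegral.integral_of_le hb, hC]
      apply setIntegral_mono_set (h2.add h2'')
      · apply Filter.Eventually.of_forall
        intro x
        simp only [Pi.zero_apply, Pi.add_apply]
        positivity
      · exact (Ioc_subset_Ioi_self).eventuallyLE
    have := abs_le.mp hbd1
    rw [hsplit, hI]
    have hGx₀ : -|G x₀| ≤ G x₀ := neg_abs_le _
    linarith
  -- Step C: conclude
  have hchoice : ∀ n : ℕ, ∃ b : ℝ, max (n : ℝ) x₀ < b ∧ G b < 1 := fun n => stepA n
  choose bseq hbseq using hchoice
  have hbseq_ge : ∀ n : ℕ, (n : ℝ) ≤ bseq n := fun n =>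
    le_of_lt (lt_of_le_of_lt (le_max_left _ _) (hbseq n).1)
  have hbseq_x₀ : ∀ n : ℕ, x₀ ≤ bseq n := fun n =>
    le_of_lt (lt_of_le_of_lt (le_max_right _ _) (hbseq n).1)
  apply integrableOn_Ioi_of_intervalIntegral_norm_bounded I x₀
    (b := bseq) (l := Filter.atTop)
  · intro n
    exact ((continuous_norm.comp hf'c).pow 2).integrableOn_Ioc
  · exact Filter.tendsto_atTop_mono hbseq_ge tendsto_natCast_atTop_atTop
  · filter_upwards with n
    have : (∫ x in x₀..bseq n, ‖‖f' x‖ ^ 2‖)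
        = ∫ x in x₀..bseq n, ‖f' x‖ ^ 2 := by
      apply intervalIntegral.integral_congr
      intro x _
      exact Real.norm_of_nonneg (sq_nonneg _)
    rw [this]
    exact stepB (bseq n) (hbseq_x₀ n) (hbseq n).2


/-- Limit point case at `+∞` for the weighted Sturm–Liouville problem
`-ψ'' + ψ = z w ψ` with `0 < δ ≤ w ∈ L^∞`: for `z ∈ ℂ∖ℝ`, any two solutions lying
in `L²((x₀,∞); w dx)` are linearly dependent. -/
theorem limit_point_case_weighted_SL
    (w : ℝ → ℝ) (hw_cont : Continuous w) (δ : ℝ) (hδ : 0 < δ)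
    (hw_lower : ∀ x, δ ≤ w x) (hw_upper : ∃ M, ∀ x, w x ≤ M)
    (z : ℂ) (hz : z.im ≠ 0) (x₀ : ℝ)
    (ψ ψ' φ φ' : ℝ → ℂ)
    (hψ : ∀ x, HasDerivAt ψ (ψ' x) x)
    (hψ' : ∀ x, HasDerivAt ψ' (ψ x - z * (w x : ℂ) * ψ x) x)
    (hφ : ∀ x, HasDerivAt φ (φ' x) x)
    (hφ' : ∀ x, HasDerivAt φ' (φ x - z * (w x : ℂ) * φ x) x)
    (hψL2 : IntegrableOn (fun x => w x * ‖ψ x‖ ^ 2) (Set.Ioi x₀))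
    (hφL2 : IntegrableOn (fun x => w x * ‖φ x‖ ^ 2) (Set.Ioi x₀)) :
    ∃ a b : ℂ, (a, b) ≠ (0, 0) ∧ ∀ x ∈ Set.Ici x₀, a * ψ x + b * φ x = 0 := by
  obtain ⟨M, hM⟩ := hw_upper
  have hw_pos : ∀ x, 0 < w x := fun x => lt_of_lt_of_le hδ (hw_lower x)
  have hwabs : ∀ x, |w x| ≤ M := fun x => by
    rw [abs_of_pos (hw_pos x)]; exact hM x
  have hMpos : 0 < M := lt_of_lt_of_le (hw_pos 0) (hM 0)
  -- continuity
  have hψc : Continuous ψ := by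
    rw [continuous_iff_continuousAt]; exact fun x => (hψ x).continuousAt
  have hφc : Continuous φ := by
    rw [continuous_iff_continuousAt]; exact fun x => (hφ x).continuousAt
  have hψ'c : Continuous ψ' := by
    rw [continuous_iff_continuousAt]; exact fun x => (hψ' x).continuousAt
  have hφ'c : Continuous φ' := by
    rw [continuous_iff_continuousAt]; exact fun x => (hφ' x).continuousAt
  have hwC : Continuous (fun x => (w x : ℂ)) := Complex.continuous_ofReal.comp hw_cont
  -- unweighted L² from weighted
  have unweight : ∀ (g : ℝ → ℂ), Continuous g →
      IntegrableOn (fun x => w x * ‖g x‖ ^ 2) (Set.Ioi x₀) →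
      IntegrableOn (fun x => ‖g x‖ ^ 2) (Set.Ioi x₀) := by
    intro g hgc hgint
    apply Integrable.mono' (hgint.const_mul δ⁻¹)
      ((continuous_norm.comp hgc).pow 2).aestronglyMeasurable
    apply Filter.Eventually.of_forall
    intro x
    show ‖‖g x‖ ^ 2‖ ≤ δ⁻¹ * (w x * ‖g x‖ ^ 2)
    rw [Real.norm_of_nonneg (sq_nonneg _)]
    have h1 : δ * ‖g x‖ ^ 2 ≤ w x * ‖g x‖ ^ 2 :=
      mul_le_mul_of_nonneg_right (hw_lower x) (sq_nonneg _)
    calc ‖g x‖ ^ 2 = δ⁻¹ * (δ * ‖g x‖ ^ 2) := by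
          field_simp
      _ ≤ δ⁻¹ * (w x * ‖g x‖ ^ 2) := by
          apply mul_le_mul_of_nonneg_left h1 (by positivity)
  have hψ2 := unweight ψ hψc hψL2
  have hφ2 := unweight φ hφc hφL2
  -- second derivative in L²
  have second : ∀ (g : ℝ → ℂ),
      IntegrableOn (fun x => ‖g x‖ ^ 2) (Set.Ioi x₀) → Continuous g →
      IntegrableOn (fun x => ‖g x - z * (w x : ℂ) * g x‖ ^ 2) (Set.Ioi x₀) := by
    intro g hgint hgc
    apply Integrable.mono' (hgint.const_mul ((1 + ‖z‖ * M) ^ 2))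
    · apply Continuous.aestronglyMeasurable
      apply (continuous_norm.comp ?_).pow 2
      exact hgc.sub ((continuous_const.mul hwC).mul hgc)
    apply Filter.Eventually.of_forall
    intro x
    rw [Real.norm_of_nonneg (sq_nonneg _)]
    have h1 : ‖g x - z * (w x : ℂ) * g x‖
        ≤ (1 + ‖z‖ * M) * ‖g x‖ := by
      have : g x - z * (w x : ℂ) * g x = (1 - z * (w x : ℂ)) * g x := by ring
      rw [this, norm_mul]
      apply mul_le_mul_of_nonneg_right _ (norm_nonneg _)
      calc ‖1 - z * (w x : ℂ)‖ ≤ ‖1‖ + ‖z * (w x : ℂ)‖ :=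
            norm_sub_le _ _
        _ = 1 + ‖z‖ * |w x| := by
            rw [norm_one, norm_mul, Complex.norm_real, Real.norm_eq_abs]
        _ ≤ 1 + ‖z‖ * M := by
            have := mul_le_mul_of_nonneg_left (hwabs x) (norm_nonneg z)
            linarith
    have h2 : (0:ℝ) ≤ ‖g x - z * (w x : ℂ) * g x‖ := norm_nonneg _
    have h3 : (0:ℝ) ≤ (1 + ‖z‖ * M) * ‖g x‖ := by positivity
    nlinarith
  -- first derivatives in L²
  have hψ'2 : IntegrableOn (fun x => ‖ψ' x‖ ^ 2) (Set.Ioi x₀) :=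
    deriv_sq_integrable ψ ψ' (fun x => ψ x - z * (w x : ℂ) * ψ x) x₀ hψ hψ'
      (hψc.sub ((continuous_const.mul hwC).mul hψc)) hψ2 (second ψ hψ2 hψc)
  have hφ'2 : IntegrableOn (fun x => ‖φ' x‖ ^ 2) (Set.Ioi x₀) :=
    deriv_sq_integrable φ φ' (fun x => φ x - z * (w x : ℂ) * φ x) x₀ hφ hφ'
      (hφc.sub ((continuous_const.mul hwC).mul hφc)) hφ2 (second φ hφ2 hφc)
  -- Wronskian is constant
  set W : ℝ → ℂ := fun x => ψ x * φ' x - ψ' x * φ x with hW_def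
  have hWd : ∀ x, HasDerivAt W 0 x := by
    intro x
    have h1 := ((hψ x).mul (hφ' x)).sub ((hψ' x).mul (hφ x))
    refine h1.congr_deriv ?_
    ring
  have hWconst : ∀ x, W x = W x₀ := fun x =>
    is_const_of_deriv_eq_zero (fun y => (hWd y).differentiableAt) (fun y => (hWd y).deriv) x x₀
  -- Wronskian is integrable on an infinite interval, hence zero
  have hWint : IntegrableOn W (Set.Ioi x₀) := by
    have hg : IntegrableOn (fun x => (‖ψ x‖ ^ 2 + ‖φ' x‖ ^ 2)
        + (‖ψ' x‖ ^ 2 + ‖φ x‖ ^ 2)) (Set.Ioi x₀) :=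
      (hψ2.add hφ'2).add (hψ'2.add hφ2)
    apply Integrable.mono' hg
    · apply Continuous.aestronglyMeasurable
      exact (hψc.mul hφ'c).sub (hψ'c.mul hφc)
    apply Filter.Eventually.of_forall
    intro x
    have h1 : ‖W x‖ ≤ ‖ψ x‖ * ‖φ' x‖
        + ‖ψ' x‖ * ‖φ x‖ := by
      calc ‖W x‖ ≤ ‖ψ x * φ' x‖ + ‖ψ' x * φ x‖ := norm_sub_le _ _
        _ = ‖ψ x‖ * ‖φ' x‖
            + ‖ψ' x‖ * ‖φ x‖ := by
          simp [map_mul]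
    nlinarith [sq_nonneg (‖ψ x‖ - ‖φ' x‖),
      sq_nonneg (‖ψ' x‖ - ‖φ x‖),
      norm_nonneg (ψ x), norm_nonneg (φ' x),
      norm_nonneg (ψ' x), norm_nonneg (φ x)]
  have hW0 : W x₀ = 0 := by
    have hconst : IntegrableOn (fun _ : ℝ => W x₀) (Set.Ioi x₀) :=
      hWint.congr (Filter.Eventually.of_forall hWconst)
    rw [integrableOn_const_iff] at hconst
    rcases hconst with h | h
    · simpa using h
    · rw [Real.volume_Ioi] at h
      exact absurd h (lt_irrefl _)
  -- produce the dependence relation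
  by_cases hφ0 : φ x₀ = 0 ∧ φ' x₀ = 0
  · refine ⟨0, 1, by simp, ?_⟩
    intro x hx
    have := sl_ode_zero z w M hwabs φ φ' hφ hφ' x₀ hφ0.1 hφ0.2 x hx
    simp [this]
  · rw [not_and_or] at hφ0
    have hW0' : ψ x₀ * φ' x₀ - ψ' x₀ * φ x₀ = 0 := hW0
    -- pick a nonzero kernel vector (a, b)
    obtain ⟨a, b, hab, h0, h0'⟩ :
        ∃ a b : ℂ, (a, b) ≠ (0, 0) ∧ a * ψ x₀ + b * φ x₀ = 0 ∧ a * ψ' x₀ + b * φ' x₀ = 0 := by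
      rcases hφ0 with h | h
      · exact ⟨φ x₀, -ψ x₀, by simp [Prod.ext_iff, h],
          by ring, by linear_combination -hW0'⟩
      · exact ⟨φ' x₀, -ψ' x₀, by simp [Prod.ext_iff, h],
          by linear_combination hW0', by ring⟩
    refine ⟨a, b, hab, ?_⟩
    intro x hx
    have hu : ∀ y, HasDerivAt (fun t => a * ψ t + b * φ t) (a * ψ' y + b * φ' y) y :=
      fun y => ((hψ y).const_mul a).add ((hφ y).const_mul b)
    have hu' : ∀ y, HasDerivAt (fun t => a * ψ' t + b * φ' t)
        ((a * ψ y + b * φ y) - z * (w y : ℂ) * (a * ψ y + b * φ y)) y := by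
      intro y
      have h1 := ((hψ' y).const_mul a).add ((hφ' y).const_mul b)
      refine h1.congr_deriv ?_
      ring
    exact sl_ode_zero z w M hwabs _ _ hu hu' x₀ h0 h0' x hx
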